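/- Let σ be the Schwarz reflection of a simply connected quadrature domain D with Riemann uniformization R : ℂ̂ \ 𝔻̄ → D extending to a rational map of degree d on ℂ̂. Then σ := R ∘ η ∘ (R|_{ℂ̂\𝔻̄})⁻¹, where η(z) = 1/conj(z), satisfies σ = id on ∂D and the diagram σ ∘ R = R ∘ η holds on ℂ̂ \ 𝔻; consequently σ : σ⁻¹(D) → D is a degree d-1 branched covering and σ : σ⁻¹(int(Dᶜ)) → int(Dᶜ) is a degree d branched covering. -/

import Mathlib

/-- Schwarz reflection of a simply connected quadrature domain. Let `D ⊆ ℂ` be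
open, and let `R = P/Q` be a rational map of degree `d` whose restriction to
the exterior of the closed unit disk is a conformal bijection onto `D`, with
`∂D = R({|z| = 1})`. Let `η(z) = 1/conj(z)` be reflection in the unit circle,
and let `σ` satisfy the Schwarz-reflection relation `σ ∘ R = R ∘ η` on
`{|z| ≥ 1}`. Then `σ` fixes `∂D` pointwise, and away from finitely many
(critical) values, `σ : σ⁻¹(D) → D` has fibers of cardinality `d - 1` while
`σ : σ⁻¹(int Dᶜ) → int Dᶜ` has fibers of cardinality `d` (branched coverings
of degree `d-1` and `d` respectively). -/
theorem schwarz_reflection_of_quadrature_domain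
    (D : Set ℂ) (hD : IsOpen D) (hDne : D.Nonempty)
    (P Q : Polynomial ℂ) (hcop : IsCoprime P Q)
    (d : ℕ) (hd : d = max P.natDegree Q.natDegree) (hd2 : 2 ≤ d)
    (R : ℂ → ℂ) (hR : ∀ z : ℂ, Q.eval z ≠ 0 → R z = P.eval z / Q.eval z)
    (hRanal : ∀ z : ℂ, 1 < ‖z‖ → DifferentiableAt ℂ R z)
    (hRbij : Set.BijOn R {z : ℂ | 1 < ‖z‖} D)
    (hbd : frontier D = R '' {z : ℂ | ‖z‖ = 1})
    (η : ℂ → ℂ) (hη : ∀ z : ℂ, η z = 1 / (starRingEnd ℂ z))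
    (σ : ℂ → ℂ)
    (hσ : ∀ z : ℂ, 1 ≤ ‖z‖ → σ (R z) = R (η z)) :
    (∀ w ∈ frontier D, σ w = w) ∧
    (∀ z : ℂ, 1 ≤ ‖z‖ → σ (R z) = R (η z)) ∧
    (∃ S : Set ℂ, S.Finite ∧
      (∀ w ∈ D \ S,
        {z : ℂ | z ∈ closure D ∧ σ z = w}.ncard = d - 1) ∧
      (∀ w ∈ interior Dᶜ \ S,
        {z : ℂ | z ∈ closure D ∧ σ z = w}.ncard = d)) := by
  classical
  -- basic facts about η
  have hηabs : ∀ z : ℂ, z ≠ 0 → ‖η z‖ = ‖z‖⁻¹ := by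
    intro z hz
    rw [hη]
    simp [norm_div, Complex.norm_conj]
  have hηη : ∀ z : ℂ, z ≠ 0 → η (η z) = z := by
    intro z hz
    rw [hη, hη]
    have hcz : (starRingEnd ℂ) z ≠ 0 := by
      simpa using hz
    simp [map_div₀]
  have hηcirc : ∀ z : ℂ, ‖z‖ = 1 → η z = z := by
    intro z hz
    have hz0 : z ≠ 0 := by
      intro h; rw [h] at hz; simp at hz
    have hcz : (starRingEnd ℂ) z ≠ 0 := by simpa using hz0
    have h1 : z * (starRingEnd ℂ) z = 1 := by
      rw [Complex.mul_conj]
      norm_cast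
      rw [Complex.normSq_eq_norm_sq, hz]
      norm_num
    rw [hη, div_eq_iff hcz]
    linear_combination -h1
  -- part 1: σ fixes the boundary
  have part1 : ∀ w ∈ frontier D, σ w = w := by
    intro w hw
    rw [hbd] at hw
    obtain ⟨z, hz, rfl⟩ := hw
    have hz' : ‖z‖ = 1 := hz
    rw [hσ z hz'.ge, hηcirc z hz']
  refine ⟨part1, hσ, ?_⟩
  -- nonzero polynomials
  have hP0 : P ≠ 0 := by
    rintro rfl
    have h1 : IsUnit Q := isCoprime_zero_left.mp hcop
    have h2 : Q.natDegree = 0 := Polynomial.natDegree_eq_zero_of_isUnit h1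
    simp [h2] at hd
    omega
  have hQ0 : Q ≠ 0 := by
    rintro rfl
    have h1 : IsUnit P := isCoprime_zero_right.mp hcop
    have h2 : P.natDegree = 0 := Polynomial.natDegree_eq_zero_of_isUnit h1
    simp [h2] at hd
    omega
  -- no common root
  have hnc : ∀ u : ℂ, Q.eval u = 0 → P.eval u ≠ 0 := by
    intro u hq hp
    obtain ⟨a, b, hab⟩ := hcop
    have h := congrArg (Polynomial.eval u) hab
    simp [hp, hq] at h
  -- root characterization
  have hFroot : ∀ w u : ℂ, Q.eval u ≠ 0 →
      ((P - Polynomial.C w * Q).eval u = 0 ↔ R u = w) := by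
    intro w u hQu
    rw [hR u hQu]
    simp only [Polynomial.eval_sub, Polynomial.eval_mul, Polynomial.eval_C]
    rw [sub_eq_zero, div_eq_iff hQu]
  -- at a root of P - wQ, Q does not vanish
  have hQne : ∀ w u : ℂ, (P - Polynomial.C w * Q).eval u = 0 → Q.eval u ≠ 0 := by
    intro w u hu hq
    have h2 : Polynomial.eval u P - w * Polynomial.eval u Q = 0 := by simpa using hu
    rw [hq, mul_zero, sub_zero] at h2
    exact hnc u hq h2
  -- Wronskian
  have hW0 : Polynomial.derivative P * Q - P * Polynomial.derivative Q ≠ 0 := by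
    intro h
    have h1 : Polynomial.derivative P * Q = P * Polynomial.derivative Q := sub_eq_zero.mp h
    have hdvdP : P ∣ Polynomial.derivative P := by
      refine hcop.dvd_of_dvd_mul_right ⟨Polynomial.derivative Q, ?_⟩
      linear_combination h1
    have hP' : Polynomial.derivative P = 0 := by
      by_contra hne
      have hle := Polynomial.natDegree_le_of_dvd hdvdP hne
      have hnd : P.natDegree ≠ 0 := by
        intro h0
        rw [Polynomial.eq_C_of_natDegree_eq_zero h0] at hne
        simp at hne
      exact absurd hle (not_le.mpr (Polynomial.natDegree_derivative_lt hnd))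
    have hdvdQ : Q ∣ Polynomial.derivative Q := by
      refine hcop.symm.dvd_of_dvd_mul_right ⟨Polynomial.derivative P, ?_⟩
      linear_combination -h1
    have hQ' : Polynomial.derivative Q = 0 := by
      by_contra hne
      have hle := Polynomial.natDegree_le_of_dvd hdvdQ hne
      have hnd : Q.natDegree ≠ 0 := by
        intro h0
        rw [Polynomial.eq_C_of_natDegree_eq_zero h0] at hne
        simp at hne
      exact absurd hle (not_le.mpr (Polynomial.natDegree_derivative_lt hnd))
    have e1 := Polynomial.natDegree_eq_zero_of_derivative_eq_zero hP'
    have e2 := Polynomial.natDegree_eq_zero_of_derivative_eq_zero hQ'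
    omega
  -- the exceptional set
  set W : Polynomial ℂ := Polynomial.derivative P * Q - P * Polynomial.derivative Q with hWdef
  set S : Set ℂ := insert (P.coeff d / Q.coeff d) (insert (R 0)
      (R '' {u : ℂ | W.eval u = 0} ∪ R '' {u : ℂ | Q.eval u = 0})) with hSdef
  have hSfin : S.Finite := by
    apply Set.Finite.insert
    apply Set.Finite.insert
    exact Set.Finite.union
      ((Polynomial.finite_setOf_isRoot hW0).image R)
      ((Polynomial.finite_setOf_isRoot hQ0).image R)
  -- one of the head coefficients is nonzero
  have hcoeffd : P.coeff d ≠ 0 ∨ Q.coeff d ≠ 0 := by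
    rcases max_cases P.natDegree Q.natDegree with ⟨h1, _⟩ | ⟨h1, _⟩
    · left
      rw [hd, h1, Polynomial.coeff_natDegree]
      exact Polynomial.leadingCoeff_ne_zero.mpr hP0
    · right
      rw [hd, h1, Polynomial.coeff_natDegree]
      exact Polynomial.leadingCoeff_ne_zero.mpr hQ0
  have hwlead : ∀ w : ℂ, w ∉ S → P.coeff d - w * Q.coeff d ≠ 0 := by
    intro w hw h
    by_cases hq : Q.coeff d = 0
    · rw [hq, mul_zero, sub_zero] at h
      rcases hcoeffd with h1 | h1
      · exact h1 h
      · exact h1 hq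
    · apply hw
      rw [hSdef]
      left
      field_simp
      linear_combination -h
  -- key counting lemma
  have key : ∀ w : ℂ, w ∉ S → w ∉ frontier D →
      {z : ℂ | z ∈ closure D ∧ σ z = w}.ncard +
        {u : ℂ | (P - Polynomial.C w * Q).eval u = 0 ∧ 1 < ‖u‖}.ncard = d ∧
      ({u : ℂ | (P - Polynomial.C w * Q).eval u = 0 ∧ 1 < ‖u‖} =
        {u : ℂ | 1 < ‖u‖ ∧ R u = w}) := by
    intro w hwS hwF
    set F : Polynomial ℂ := P - Polynomial.C w * Q with hFdef
    have hFne : F ≠ 0 := by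
      intro h
      apply hwlead w hwS
      have h2 := congrArg (fun p => Polynomial.coeff p d) h
      simpa [hFdef, Polynomial.coeff_sub] using h2
    have hFdegle : F.natDegree ≤ d := by
      refine le_trans (Polynomial.natDegree_sub_le _ _) ?_
      refine max_le ?_ (le_trans (Polynomial.natDegree_C_mul_le _ _) ?_)
      · rw [hd]; exact le_max_left _ _
      · rw [hd]; exact le_max_right _ _
    have hFdeg : F.natDegree = d := by
      refine le_antisymm hFdegle ?_
      apply Polynomial.le_natDegree_of_ne_zero
      have : F.coeff d = P.coeff d - w * Q.coeff d := by
        simp [hFdef, Polynomial.coeff_sub]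
      rw [this]
      exact hwlead w hwS
    -- roots of F are not roots of Q, and determine R
    have hQF : ∀ u : ℂ, F.eval u = 0 → Q.eval u ≠ 0 := fun u hu => hQne w u hu
    have hRF : ∀ u : ℂ, F.eval u = 0 → R u = w := fun u hu =>
      (hFroot w u (hQF u hu)).mp hu
    -- F is separable
    have hsep : F.Separable := by
      rw [Polynomial.separable_def, ← EuclideanDomain.gcd_isUnit_iff]
      by_contra hu
      have hgF : EuclideanDomain.gcd F (Polynomial.derivative F) ∣ F :=
        EuclideanDomain.gcd_dvd_left _ _
      have hgF' : EuclideanDomain.gcd F (Polynomial.derivative F) ∣ Polynomial.derivative F :=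
        EuclideanDomain.gcd_dvd_right _ _
      have hgne : EuclideanDomain.gcd F (Polynomial.derivative F) ≠ 0 := by
        intro h
        exact hFne (EuclideanDomain.gcd_eq_zero_iff.mp h).1
      have hdegpos : 0 < (EuclideanDomain.gcd F (Polynomial.derivative F)).degree := by
        refine lt_of_le_of_ne (Polynomial.zero_le_degree_iff.mpr hgne) ?_
        intro h
        exact hu (Polynomial.isUnit_iff_degree_eq_zero.mpr h.symm)
      obtain ⟨u, hroot⟩ := Complex.exists_root hdegpos
      have hFu : F.eval u = 0 :=
        Polynomial.eval_eq_zero_of_dvd_of_eval_eq_zero hgF hroot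
      have hF'u : (Polynomial.derivative F).eval u = 0 :=
        Polynomial.eval_eq_zero_of_dvd_of_eval_eq_zero hgF' hroot
      have hQu : Q.eval u ≠ 0 := hQF u hFu
      have hPu : P.eval u = w * Q.eval u := by
        have : P.eval u - w * Q.eval u = 0 := by simpa [hFdef] using hFu
        linear_combination this
      have hP'u : (Polynomial.derivative P).eval u =
          w * (Polynomial.derivative Q).eval u := by
        have hdF : Polynomial.derivative F =
            Polynomial.derivative P - Polynomial.C w * Polynomial.derivative Q := by
          simp [hFdef]
        rw [hdF] at hF'u
        have : (Polynomial.derivative P).eval u -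
            w * (Polynomial.derivative Q).eval u = 0 := by simpa using hF'u
        linear_combination this
      have hWu : W.eval u = 0 := by
        simp only [hWdef, Polynomial.eval_sub, Polynomial.eval_mul]
        rw [hPu, hP'u]
        ring
      apply hwS
      rw [hSdef]
      right; right; left
      exact ⟨u, hWu, hRF u hFu⟩
    -- the root set
    have hnodup : F.roots.Nodup := Polynomial.nodup_roots hsep
    have hcard : Multiset.card F.roots = d := by
      rw [← hFdeg]
      exact Polynomial.splits_iff_card_roots.mp (IsAlgClosed.splits F)
    have hrootset : {u : ℂ | F.eval u = 0} = ↑F.roots.toFinset := by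
      ext u
      simp [Polynomial.mem_roots', hFne, Polynomial.IsRoot.def]
    have hAfin : {u : ℂ | F.eval u = 0}.Finite := by
      rw [hrootset]; exact (F.roots.toFinset : Set ℂ).toFinite
    have hAcard : {u : ℂ | F.eval u = 0}.ncard = d := by
      rw [hrootset, Set.ncard_coe_finset, Multiset.toFinset_card_of_nodup hnodup, hcard]
    -- no roots on the unit circle
    have hnocirc : ∀ u : ℂ, F.eval u = 0 → ‖u‖ ≠ 1 := by
      intro u hu h1
      apply hwF
      rw [hbd]
      exact ⟨u, h1, hRF u hu⟩
    -- split the root set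
    set T : Set ℂ := {u : ℂ | F.eval u = 0 ∧ ‖u‖ < 1} with hTdef
    set U : Set ℂ := {u : ℂ | F.eval u = 0 ∧ 1 < ‖u‖} with hUdef
    have hTsub : T ⊆ {u : ℂ | F.eval u = 0} := fun u hu => hu.1
    have hUsub : U ⊆ {u : ℂ | F.eval u = 0} := fun u hu => hu.1
    have hTfin : T.Finite := hAfin.subset hTsub
    have hUfin : U.Finite := hAfin.subset hUsub
    have hTU : {u : ℂ | F.eval u = 0} = T ∪ U := by
      ext u
      constructor
      · intro hu
        rcases lt_trichotomy (‖u‖) 1 with h | h | h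
        · exact Or.inl ⟨hu, h⟩
        · exact absurd h (hnocirc u hu)
        · exact Or.inr ⟨hu, h⟩
      · rintro (⟨hu, _⟩ | ⟨hu, _⟩) <;> exact hu
    have hdisj : Disjoint T U := by
      rw [Set.disjoint_left]
      rintro u ⟨_, h1⟩ ⟨_, h2⟩
      exact absurd (lt_trans h1 h2) (lt_irrefl _)
    have hsplit : T.ncard + U.ncard = d := by
      rw [← Set.ncard_union_eq hdisj hTfin hUfin, ← hTU, hAcard]
    -- 0 is not a root
    have h0T : (0 : ℂ) ∉ T := by
      rintro ⟨h0, _⟩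
      apply hwS
      rw [hSdef]
      right; left
      exact (hRF 0 h0).symm
    -- the fiber equals the image of T under R ∘ η
    have hfiber : {z : ℂ | z ∈ closure D ∧ σ z = w} = (fun u => R (η u)) '' T := by
      ext z
      constructor
      · rintro ⟨hzc, hzw⟩
        rw [closure_eq_self_union_frontier] at hzc
        rcases hzc with hzD | hzF
        · obtain ⟨v, hv, hvz⟩ := hRbij.surjOn hzD
          have hv1 : 1 < ‖v‖ := hv
          have hv0 : v ≠ 0 := by
            intro h
            rw [h] at hv1
            simp only [norm_zero] at hv1
            linarith
          have hσz : R (η v) = w := by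
            rw [← hvz] at hzw
            rw [← hσ v hv1.le]
            exact hzw
          have habs : ‖η v‖ = (‖v‖)⁻¹ := hηabs v hv0
          have hu0 : η v ≠ 0 := by
            intro h
            rw [h] at habs
            simp only [norm_zero] at habs
            have h3 : ‖v‖ = 0 := inv_eq_zero.mp habs.symm
            linarith
          have huabs : ‖η v‖ < 1 := by
            rw [habs, inv_lt_one_iff₀]
            right; exact hv1
          have hQu : Q.eval (η v) ≠ 0 := by
            intro hq
            apply hwS
            rw [hSdef]
            right; right; right
            exact ⟨η v, hq, hσz⟩
          have hFu : F.eval (η v) = 0 := (hFroot w (η v) hQu).mpr hσz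
          refine ⟨η v, ⟨hFu, huabs⟩, ?_⟩
          show R (η (η v)) = z
          rw [hηη v hv0, hvz]
        · rw [part1 z hzF] at hzw
          exact absurd (hzw ▸ hzF) hwF
      · rintro ⟨u, ⟨hFu, huabs⟩, rfl⟩
        have hu0 : u ≠ 0 := by
          intro h
          exact h0T (h ▸ ⟨hFu, huabs⟩)
        have habspos : 0 < ‖u‖ := by
          simpa [norm_pos_iff] using hu0
        have hv1 : 1 < ‖η u‖ := by
          rw [hηabs u hu0]
          exact (one_lt_inv₀ habspos).mpr huabs
        constructor
        · exact subset_closure (hRbij.mapsTo hv1)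
        · rw [hσ (η u) hv1.le, hηη u hu0]
          exact hRF u hFu
    -- injectivity
    have hinj : Set.InjOn (fun u => R (η u)) T := by
      intro u1 hu1 u2 hu2 h
      have hu10 : u1 ≠ 0 := fun h0 => h0T (h0 ▸ hu1)
      have hu20 : u2 ≠ 0 := fun h0 => h0T (h0 ▸ hu2)
      have h1pos : 0 < ‖u1‖ := by simpa [norm_pos_iff] using hu10
      have h2pos : 0 < ‖u2‖ := by simpa [norm_pos_iff] using hu20
      have hv1 : 1 < ‖η u1‖ := by
        rw [hηabs u1 hu10]; exact (one_lt_inv₀ h1pos).mpr hu1.2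
      have hv2 : 1 < ‖η u2‖ := by
        rw [hηabs u2 hu20]; exact (one_lt_inv₀ h2pos).mpr hu2.2
      have := hRbij.injOn hv1 hv2 h
      calc u1 = η (η u1) := (hηη u1 hu10).symm
        _ = η (η u2) := by rw [this]
        _ = u2 := hηη u2 hu20
    have hfibercard : {z : ℂ | z ∈ closure D ∧ σ z = w}.ncard = T.ncard := by
      rw [hfiber, Set.ncard_image_of_injOn hinj]
    constructor
    · rw [hfibercard]; exact hsplit
    · ext u
      constructor
      · rintro ⟨hu, h1⟩
        exact ⟨h1, hRF u hu⟩
      · rintro ⟨h1, hRu⟩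
        refine ⟨?_, h1⟩
        have hQu : Q.eval u ≠ 0 := by
          intro hq
          apply hwS
          rw [hSdef]
          right; right; right
          exact ⟨u, hq, hRu⟩
        exact (hFroot w u hQu).mpr hRu
  refine ⟨S, hSfin, ?_, ?_⟩
  · intro w hw
    obtain ⟨hwD, hwS⟩ := hw
    have hwF : w ∉ frontier D := by
      intro h
      rw [hD.frontier_eq] at h
      exact h.2 hwD
    obtain ⟨hsum, hUeq⟩ := key w hwS hwF
    obtain ⟨v₀, hv₀, hv₀w⟩ := hRbij.surjOn hwD
    have hUsing : {u : ℂ | (P - Polynomial.C w * Q).eval u = 0 ∧ 1 < ‖u‖} = {v₀} := by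
      rw [hUeq]
      ext x
      constructor
      · rintro ⟨hx1, hx2⟩
        exact hRbij.injOn hx1 hv₀ (hx2.trans hv₀w.symm)
      · rintro rfl
        exact ⟨hv₀, hv₀w⟩
    rw [hUsing] at hsum
    simp [Set.ncard_singleton] at hsum
    omega
  · intro w hw
    obtain ⟨hwD, hwS⟩ := hw
    have hwnc : w ∉ closure D := by
      rw [interior_compl] at hwD
      exact hwD
    have hwF : w ∉ frontier D := fun h => hwnc (frontier_subset_closure h)
    obtain ⟨hsum, hUeq⟩ := key w hwS hwF
    have hUempty : {u : ℂ | (P - Polynomial.C w * Q).eval u = 0 ∧ 1 < ‖u‖} = ∅ := by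
      rw [hUeq]
      ext x
      simp only [Set.mem_setOf_eq, Set.mem_empty_iff_false, iff_false, not_and]
      intro hx hRx
      exact hwnc (subset_closure (hRx ▸ hRbij.mapsTo hx))
    rw [hUempty] at hsum
    simp at hsum
    exact hsum
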